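/- A nonzero element g_k ∈ F^{(k)} lies in the GL_∞-orbit O_k = R(GL_∞)|k⟩ if and only if Σ_{i ∈ ℤ+1/2} ψ^+_i g_k ⊗ ψ^-_{-i} g_k = 0 in F ⊗ F. -/

import Mathlib

/-- A semi-infinite (Maya) sequence: a strictly decreasing `f : ℕ → ℤ` with
`f n = k - n` for `n ≫ 0`; it encodes the semi-infinite monomial
`e_{f 0} ∧ e_{f 1} ∧ e_{f 2} ∧ ⋯` (strictly decreasing indices, eventually
decreasing by exactly one). -/
def SemiInfinite (f : ℕ → ℤ) : Prop :=
  StrictAnti f ∧ ∃ N : ℕ, ∃ k : ℤ, ∀ n ≥ N, f n = k - n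

/-- Index set of the basis of semi-infinite monomials of the wedge space `F`. -/
def Maya : Type := {f : ℕ → ℤ // SemiInfinite f}

/-- Delete the `s`-th entry (0-indexed) of a sequence. -/
def deleteAt (f : ℕ → ℤ) (s : ℕ) : ℕ → ℤ := fun n => if n < s then f n else f (n + 1)

/-- Insert the value `m` at position `s` (0-indexed) of a sequence. -/
def insertAt (f : ℕ → ℤ) (m : ℤ) (s : ℕ) : ℕ → ℤ :=
  fun n => if n < s then f n else if n = s then m else f (n - 1)

/-- `f` has charge `k`: `f n = k - n` for `n ≫ 0`. -/
def HasCharge (f : ℕ → ℤ) (k : ℤ) : Prop := ∃ N : ℕ, ∀ n ≥ N, f n = k - n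

/-- The vacuum monomial `|k⟩ = e_k ∧ e_{k-1} ∧ e_{k-2} ∧ ⋯`. -/
def vacSeq (k : ℤ) : Maya :=
  ⟨fun n => k - n, by intro a b hab; dsimp only; omega, 0, k, fun n _ => rfl⟩

namespace Maya

lemma sa (f : Maya) : StrictAnti f.1 := f.2.1

lemma sa_le (f : Maya) {a b : ℕ} (h : a ≤ b) : f.1 b ≤ f.1 a := f.sa.antitone h

/-- `f n + n` is antitone; key arithmetic consequence of strict antitonicity over ℤ. -/
lemma add_antitone (f : Maya) : Antitone (fun n : ℕ => f.1 n + n) := by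
  apply antitone_nat_of_succ_le
  intro n
  have h : f.1 (n+1) < f.1 n := f.sa (by omega)
  show f.1 (n+1) + ((n+1 : ℕ) : ℤ) ≤ f.1 n + (n : ℤ)
  push_cast
  omega

lemma exists_le (f : Maya) (m : ℤ) : ∃ n : ℕ, f.1 n ≤ m := by
  obtain ⟨N, k, hk⟩ := f.2.2
  refine ⟨N + (k - m).toNat, ?_⟩
  rw [hk _ (Nat.le_add_right _ _)]
  push_cast
  omega

lemma injective (f : Maya) : Function.Injective f.1 := f.sa.injective

end Maya

lemma semiInfinite_deleteAt (f : Maya) (s : ℕ) : SemiInfinite (deleteAt f.1 s) := by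
  constructor
  · intro a b hab
    unfold deleteAt
    split_ifs <;> exact f.sa (by omega)
  · obtain ⟨N, k, hk⟩ := f.2.2
    refine ⟨max N s, k - 1, fun n hn => ?_⟩
    unfold deleteAt
    rw [if_neg (by omega), hk (n+1) (by omega)]
    push_cast; ring

def Maya.del (f : Maya) (s : ℕ) : Maya := ⟨deleteAt f.1 s, semiInfinite_deleteAt f s⟩

lemma semiInfinite_insertAt (f : Maya) (m : ℤ) (s : ℕ)
    (h1 : ∀ n < s, m < f.1 n) (h2 : f.1 s < m) : SemiInfinite (insertAt f.1 m s) := by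
  have hlt : ∀ n, s ≤ n → f.1 n < m := fun n hn => lt_of_le_of_lt (f.sa_le hn) h2
  constructor
  · intro a b hab
    unfold insertAt
    split_ifs <;>
      first
        | exact f.sa (by omega)
        | exact h1 a (by omega)
        | exact hlt (b-1) (by omega)
        | omega
  · obtain ⟨N, k, hk⟩ := f.2.2
    refine ⟨max (N+1) (s+1), k + 1, fun n hn => ?_⟩
    unfold insertAt
    rw [if_neg (by omega), if_neg (by omega), hk (n-1) (by omega)]
    push_cast [Nat.cast_sub (by omega : 1 ≤ n)]
    ring

/-- The canonical insertion position: least `n` with `f n ≤ m`. -/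
noncomputable def Maya.pos (f : Maya) (m : ℤ) : ℕ := Nat.find (f.exists_le m)

namespace Maya

lemma pos_le (f : Maya) (m : ℤ) : f.1 (f.pos m) ≤ m := Nat.find_spec (f.exists_le m)

lemma lt_of_lt_pos (f : Maya) {m : ℤ} {n : ℕ} (h : n < f.pos m) : m < f.1 n := by
  have := Nat.find_min (f.exists_le m) h
  omega

lemma pos_iff (f : Maya) (m : ℤ) (n : ℕ) : n < f.pos m ↔ m < f.1 n := by
  constructor
  · exact fun h => f.lt_of_lt_pos h
  · intro h
    by_contra hn
    have h1 : f.1 n ≤ f.1 (f.pos m) := f.sa_le (by omega)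
    have h2 := f.pos_le m
    omega

lemma pos_eq_of (f : Maya) {m : ℤ} {s : ℕ} (h1 : ∀ n < s, m < f.1 n) (h2 : f.1 s ≤ m) :
    f.pos m = s := by
  have hle : f.pos m ≤ s := Nat.find_le h2
  rcases Nat.lt_or_ge (f.pos m) s with h | h
  · exact absurd (f.pos_le m) (by have := h1 _ h; omega)
  · omega

lemma pos_of_mem (f : Maya) {m : ℤ} {t : ℕ} (h : f.1 t = m) : f.pos m = t :=
  f.pos_eq_of (fun n hn => h ▸ f.sa hn) (le_of_eq h)

/-- Insert `m` (not an entry) into `f` at the canonical position. -/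
noncomputable def ins (f : Maya) (m : ℤ) (h : ∀ t, f.1 t ≠ m) : Maya :=
  ⟨insertAt f.1 m (f.pos m),
   semiInfinite_insertAt f m (f.pos m) (fun n hn => f.lt_of_lt_pos hn)
     (lt_of_le_of_ne (f.pos_le m) (h _))⟩

lemma ext {f g : Maya} (h : f.1 = g.1) : f = g := Subtype.ext h

end Maya

lemma hasCharge_deleteAt {f : Maya} {k : ℤ} (h : HasCharge f.1 k) (s : ℕ) :
    HasCharge (deleteAt f.1 s) (k - 1) := by
  obtain ⟨N, hN⟩ := h
  refine ⟨max N s, fun n hn => ?_⟩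
  unfold deleteAt
  rw [if_neg (by omega), hN (n+1) (by omega)]
  push_cast; ring

lemma vacSeq_apply (k : ℤ) (n : ℕ) : (vacSeq k).1 n = k - n := rfl

/-- entries below the eventual range are always present -/
lemma Maya.cofinal (f : Maya) : ∃ c : ℤ, ∀ m ≤ c, ∃ s, f.1 s = m := by
  obtain ⟨N, k, hk⟩ := f.2.2
  refine ⟨k - N, fun m hm => ⟨(k - m).toNat, ?_⟩⟩
  rw [hk _ (by omega)]
  omega

lemma Maya.finite_range_gt (f : Maya) (c : ℤ) : {m : ℤ | (∃ s, f.1 s = m) ∧ c < m}.Finite := by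
  obtain ⟨S, hS⟩ := f.exists_le c
  apply Set.Finite.subset ((Set.finite_Iio S).image f.1)
  rintro m ⟨⟨s, rfl⟩, hc⟩
  refine ⟨s, show s < S from ?_, rfl⟩
  by_contra h
  have := f.sa_le (Nat.le_of_not_lt h)
  omega

/-- every entry of a charge-`k` Maya satisfies `f i ≥ k - i`. -/
lemma Maya.ge_of_hasCharge {f : Maya} {k : ℤ} (h : HasCharge f.1 k) (i : ℕ) :
    k - i ≤ f.1 i := by
  obtain ⟨N, hN⟩ := h
  have h1 : f.1 (N + i) + ((N + i : ℕ) : ℤ) ≤ f.1 i + (i : ℤ) := f.add_antitone (Nat.le_add_left i N)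
  have h2 := hN (N + i) (Nat.le_add_right N i)
  push_cast at h1
  omega

-- PART A2 : pure insert/delete identities

lemma insertAt_self (f : ℕ → ℤ) (m : ℤ) (s : ℕ) : insertAt f m s s = m := by
  simp [insertAt]

lemma insertAt_mem (f : ℕ → ℤ) {m : ℤ} (n : ℤ) {s t : ℕ} (ht : f t = m) :
    ∃ w, insertAt f n s w = m := by
  refine ⟨if t < s then t else t + 1, ?_⟩
  simp only [insertAt]
  split_ifs <;> first | exact ht | omega | (rw [← ht]; congr 1; omega)

lemma insertAt_not_mem (f : Maya) {m : ℤ} (hm : ∀ t, f.1 t ≠ m) {n : ℤ} (hnm : n ≠ m)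
    (s : ℕ) : ∀ u, insertAt f.1 n s u ≠ m := by
  intro u
  unfold insertAt
  split_ifs
  exacts [hm u, hnm, hm (u-1)]

lemma deleteAt_mem (f : ℕ → ℤ) (u : ℕ) {t : ℕ} (hne : t ≠ u) :
    ∃ w, deleteAt f u w = f t := by
  refine ⟨if t < u then t else t - 1, ?_⟩
  simp only [deleteAt]
  split_ifs <;> first | rfl | omega | (congr 1; omega)

lemma deleteAt_not_mem (f : Maya) (t : ℕ) : ∀ u, deleteAt f.1 t u ≠ f.1 t := by
  intro u
  unfold deleteAt
  split_ifs with h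
  · exact ne_of_gt (f.sa h)
  · exact ne_of_lt (f.sa (by omega))

lemma deleteAt_range (f : ℕ → ℤ) (t : ℕ) (u : ℕ) : ∃ w, deleteAt f t u = f w := by
  unfold deleteAt
  split_ifs
  exacts [⟨u, rfl⟩, ⟨u+1, rfl⟩]

-- I1
lemma deleteAt_insertAt (f : ℕ → ℤ) (m : ℤ) (s : ℕ) : deleteAt (insertAt f m s) s = f := by
  funext i
  simp only [deleteAt, insertAt]
  split_ifs <;> first | rfl | omega | (congr 1; omega)

-- I2
lemma insertAt_deleteAt (f : ℕ → ℤ) (t : ℕ) : insertAt (deleteAt f t) (f t) t = f := by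
  funext i
  simp only [deleteAt, insertAt]
  split_ifs <;> first | rfl | omega | (congr 1; omega)

-- I3 : t < p
lemma deleteAt_insertAt_comm_lt (f : ℕ → ℤ) (n : ℤ) {t p : ℕ} (h : t < p) :
    deleteAt (insertAt f n p) t = insertAt (deleteAt f t) n (p - 1) := by
  funext i
  simp only [deleteAt, insertAt]
  split_ifs <;> first | rfl | omega | (congr 1; omega)

-- I4 : p ≤ t
lemma deleteAt_insertAt_comm_ge (f : ℕ → ℤ) (n : ℤ) {t p : ℕ} (h : p ≤ t) :
    deleteAt (insertAt f n p) (t + 1) = insertAt (deleteAt f t) n p := by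
  funext i
  simp only [deleteAt, insertAt]
  split_ifs <;> first | rfl | omega | (congr 1; omega)

-- I5 : q ≤ p
lemma insertAt_insertAt_comm (f : ℕ → ℤ) (m n : ℤ) {q p : ℕ} (h : q ≤ p) :
    insertAt (insertAt f n q) m (p + 1) = insertAt (insertAt f m p) n q := by
  funext i
  simp only [insertAt]
  split_ifs <;> first | rfl | omega | (congr 1; omega)

-- I6 : t < u
lemma deleteAt_deleteAt_comm (f : ℕ → ℤ) {t u : ℕ} (h : t < u) :
    deleteAt (deleteAt f t) (u - 1) = deleteAt (deleteAt f u) t := by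
  funext i
  simp only [deleteAt]
  split_ifs <;> first | rfl | omega | (congr 1; omega)

def mkIns (f : Maya) (m : ℤ) (s : ℕ) (h1 : ∀ n < s, m < f.1 n) (h2 : f.1 s < m) : Maya :=
  ⟨insertAt f.1 m s, semiInfinite_insertAt f m s h1 h2⟩

lemma Maya.pos_mono (f : Maya) {m n : ℤ} (h : m ≤ n) : f.pos n ≤ f.pos m :=
  Nat.find_le (le_trans (f.pos_le m) h)

-- PART B : operator context and anticommutation relations

/-- Bundled data of the wedge-space presentation. -/
structure WedgeCtx (F : Type*) [AddCommGroup F] [Module ℂ F] where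
  B : Module.Basis Maya ℂ F
  psiP : ℤ → F →ₗ[ℂ] F
  psiM : ℤ → F →ₗ[ℂ] F
  hP0 : ∀ (f : Maya) (m : ℤ), (∃ s, f.1 s = m) → psiP m (B f) = 0
  hP : ∀ (f g : Maya) (m : ℤ) (s : ℕ), (∀ n, n < s ↔ m < f.1 n) →
      g.1 = insertAt f.1 m s → psiP m (B f) = ((-1 : ℂ)) ^ s • B g
  hM0 : ∀ (f : Maya) (m : ℤ), (∀ s, f.1 s ≠ m) → psiM m (B f) = 0
  hM : ∀ (f g : Maya) (m : ℤ) (s : ℕ), f.1 s = m →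
      g.1 = deleteAt f.1 s → psiM m (B f) = ((-1 : ℂ)) ^ s • B g

namespace WedgeCtx

variable {F : Type*} [AddCommGroup F] [Module ℂ F] (C : WedgeCtx F)

lemma psiP_eq (f gg : Maya) (m : ℤ) (s : ℕ) (h1 : ∀ n < s, m < f.1 n) (h2 : f.1 s ≤ m)
    (hg : gg.1 = insertAt f.1 m s) : C.psiP m (C.B f) = (-1 : ℂ) ^ s • C.B gg := by
  refine C.hP f gg m s (fun n => ⟨h1 n, fun hm => ?_⟩) hg
  by_contra hn
  have := f.sa_le (show s ≤ n by omega)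
  omega

/-- `ψ⁺_m ψ⁺_m = 0` on basis vectors. -/
lemma bPPself (f : Maya) (m : ℤ) : C.psiP m (C.psiP m (C.B f)) = 0 := by
  by_cases hm : ∃ t, f.1 t = m
  · rw [C.hP0 f m hm, map_zero]
  · push_neg at hm
    have h1 : ∀ n < f.pos m, m < f.1 n := fun n hn => f.lt_of_lt_pos hn
    have h2 : f.1 (f.pos m) < m := lt_of_le_of_ne (f.pos_le m) (hm _)
    rw [C.psiP_eq f (mkIns f m _ h1 h2) m _ h1 h2.le rfl, map_smul,
      C.hP0 _ m ⟨f.pos m, insertAt_self _ _ _⟩, smul_zero]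

/-- `ψ⁺` skew-commutation on basis vectors, ordered case `m < n`. -/
lemma bPP_lt (f : Maya) {m n : ℤ} (hmn : m < n) :
    C.psiP m (C.psiP n (C.B f)) = - C.psiP n (C.psiP m (C.B f)) := by
  by_cases hm : ∃ t, f.1 t = m
  · rw [C.hP0 f m hm, map_zero, neg_zero]
    by_cases hn : ∃ t, f.1 t = n
    · rw [C.hP0 f n hn, map_zero]
    · push_neg at hn
      have h1 : ∀ u < f.pos n, n < f.1 u := fun u hu => f.lt_of_lt_pos hu
      have h2 : f.1 (f.pos n) < n := lt_of_le_of_ne (f.pos_le n) (hn _)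
      obtain ⟨t, ht⟩ := hm
      rw [C.psiP_eq f (mkIns f n _ h1 h2) n _ h1 h2.le rfl, map_smul,
        C.hP0 _ m (insertAt_mem f.1 n ht), smul_zero]
  · by_cases hn : ∃ t, f.1 t = n
    · push_neg at hm
      have h1 : ∀ u < f.pos m, m < f.1 u := fun u hu => f.lt_of_lt_pos hu
      have h2 : f.1 (f.pos m) < m := lt_of_le_of_ne (f.pos_le m) (hm _)
      obtain ⟨t, ht⟩ := hn
      rw [C.hP0 f n ⟨t, ht⟩, map_zero,
        C.psiP_eq f (mkIns f m _ h1 h2) m _ h1 h2.le rfl, map_smul,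
        C.hP0 _ n (insertAt_mem f.1 m ht), smul_zero, neg_zero]
    · push_neg at hm; push_neg at hn
      set q := f.pos n with hq
      set p := f.pos m with hp
      have hqp : q ≤ p := f.pos_mono hmn.le
      have hq1 : ∀ u < q, n < f.1 u := fun u hu => f.lt_of_lt_pos hu
      have hq2 : f.1 q < n := lt_of_le_of_ne (f.pos_le n) (hn _)
      have hp1 : ∀ u < p, m < f.1 u := fun u hu => f.lt_of_lt_pos hu
      have hp2 : f.1 p < m := lt_of_le_of_ne (f.pos_le m) (hm _)
      set gq : Maya := mkIns f n q hq1 hq2 with hgq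
      set gp : Maya := mkIns f m p hp1 hp2 with hgp
      -- position of m in gq is p+1
      have hA1 : ∀ u < p + 1, m < gq.1 u := by
        intro u hu
        show m < insertAt f.1 n q u
        unfold insertAt
        split_ifs with e1 e2
        · exact lt_trans hmn (hq1 u e1)
        · exact hmn
        · exact hp1 (u-1) (by omega)
      have hA2 : gq.1 (p+1) ≤ m := by
        show insertAt f.1 n q (p+1) ≤ m
        unfold insertAt
        rw [if_neg (by omega), if_neg (by omega)]
        simpa using hp2.le
      -- position of n in gp is q
      have hB1 : ∀ u < q, n < gp.1 u := by
        intro u hu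
        show n < insertAt f.1 m p u
        unfold insertAt
        rw [if_pos (by omega)]
        exact hq1 u hu
      have hB2 : gp.1 q ≤ n := by
        show insertAt f.1 m p q ≤ n
        unfold insertAt
        split_ifs with e1 e2
        · exact hq2.le
        · exact hmn.le
        · exact absurd hqp (by omega)
      -- the common target Maya
      set g2 : Maya := mkIns gq m (p+1) hA1 (lt_of_le_of_ne hA2
        (insertAt_not_mem f hm (ne_of_gt hmn) q _)) with hg2
      have hseq : g2.1 = insertAt gp.1 n q := by
        show insertAt gq.1 m (p+1) = insertAt gp.1 n q
        show insertAt (insertAt f.1 n q) m (p+1) = insertAt (insertAt f.1 m p) n q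
        exact insertAt_insertAt_comm f.1 m n hqp
      rw [C.psiP_eq f gq n q hq1 hq2.le rfl, map_smul,
        C.psiP_eq gq g2 m (p+1) hA1 hA2 rfl,
        C.psiP_eq f gp m p hp1 hp2.le rfl, map_smul,
        C.psiP_eq gp g2 n q hB1 hB2 hseq,
        smul_smul, smul_smul, ← neg_smul]
      congr 1
      rw [pow_succ]
      ring

/-- `ψ⁺` skew-commutation on basis vectors. -/
lemma bPP (f : Maya) (m n : ℤ) :
    C.psiP m (C.psiP n (C.B f)) = - C.psiP n (C.psiP m (C.B f)) := by
  rcases lt_trichotomy m n with h | rfl | h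
  · exact C.bPP_lt f h
  · rw [C.bPPself]; simp [C.bPPself]
  · rw [C.bPP_lt f h, neg_neg]

/-- `ψ⁻_m ψ⁻_m = 0` on basis vectors. -/
lemma bMMself (f : Maya) (m : ℤ) : C.psiM m (C.psiM m (C.B f)) = 0 := by
  by_cases hm : ∃ t, f.1 t = m
  · obtain ⟨t, ht⟩ := hm
    rw [C.hM f (f.del t) m t ht rfl, map_smul,
      C.hM0 (f.del t) m (fun u => ht ▸ deleteAt_not_mem f t u), smul_zero]
  · push_neg at hm
    rw [C.hM0 f m hm, map_zero]

/-- `ψ⁻` skew-commutation on basis vectors, ordered case: `m` sits at `t`,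
`n` at `u`, `t < u`. -/
lemma bMM_aux (f : Maya) {m n : ℤ} {t u : ℕ} (ht : f.1 t = m) (hu : f.1 u = n)
    (htu : t < u) :
    C.psiM n (C.psiM m (C.B f)) = - C.psiM m (C.psiM n (C.B f)) := by
  have hn_del : (f.del t).1 (u-1) = n := by
    show deleteAt f.1 t (u-1) = n
    unfold deleteAt
    rw [if_neg (by omega), show u - 1 + 1 = u by omega]
    exact hu
  have hm_del : (f.del u).1 t = m := by
    show deleteAt f.1 u t = m
    unfold deleteAt
    rw [if_pos htu]
    exact ht
  have hseq : ((f.del t).del (u-1)).1 = deleteAt (f.del u).1 t := by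
    show deleteAt (deleteAt f.1 t) (u-1) = deleteAt (deleteAt f.1 u) t
    exact deleteAt_deleteAt_comm f.1 htu
  rw [C.hM f (f.del t) m t ht rfl, map_smul,
    C.hM (f.del t) ((f.del t).del (u-1)) n (u-1) hn_del rfl,
    C.hM f (f.del u) n u hu rfl, map_smul,
    C.hM (f.del u) ((f.del t).del (u-1)) m t hm_del hseq,
    smul_smul, smul_smul, ← neg_smul]
  congr 1
  have h2 : ((-1:ℂ))^u = ((-1:ℂ))^(u-1) * (-1) := by
    rw [← pow_succ, show u - 1 + 1 = u by omega]
  rw [h2]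
  ring

/-- `ψ⁻` skew-commutation on basis vectors. -/
lemma bMM (f : Maya) (m n : ℤ) :
    C.psiM m (C.psiM n (C.B f)) = - C.psiM n (C.psiM m (C.B f)) := by
  rcases eq_or_ne m n with rfl | hmn
  · rw [C.bMMself]; simp [C.bMMself]
  by_cases hn : ∃ u, f.1 u = n
  · by_cases hm : ∃ t, f.1 t = m
    · obtain ⟨t, ht⟩ := hm
      obtain ⟨u, hu⟩ := hn
      have htu : t ≠ u := fun h => hmn (by rw [← ht, ← hu, h])
      rcases htu.lt_or_gt with h | h
      · rw [C.bMM_aux f ht hu h, neg_neg]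
      · exact C.bMM_aux f hu ht h
    · push_neg at hm
      obtain ⟨u, hu⟩ := hn
      rw [C.hM0 f m hm, map_zero, neg_zero,
        C.hM f (f.del u) n u hu rfl, map_smul,
        C.hM0 (f.del u) m (fun w => by
          obtain ⟨w', hw'⟩ := deleteAt_range f.1 u w
          rw [show (f.del u).1 w = deleteAt f.1 u w from rfl, hw']
          exact hm w'), smul_zero]
  · push_neg at hn
    rw [C.hM0 f n hn, map_zero]
    by_cases hm : ∃ t, f.1 t = m
    · obtain ⟨t, ht⟩ := hm
      rw [C.hM f (f.del t) m t ht rfl, map_smul,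
        C.hM0 (f.del t) n (fun w => by
          obtain ⟨w', hw'⟩ := deleteAt_range f.1 t w
          rw [show (f.del t).1 w = deleteAt f.1 t w from rfl, hw']
          exact hn w'), smul_zero, neg_zero]
    · push_neg at hm
      rw [C.hM0 f m hm, map_zero, neg_zero]

end WedgeCtx

namespace WedgeCtx

variable {F : Type*} [AddCommGroup F] [Module ℂ F] (C : WedgeCtx F)

/-- Canonical ψ⁻ and ψ⁺ mixed relation on basis vectors:
`ψ⁻_m ψ⁺_n + ψ⁺_n ψ⁻_m = δ_{mn}`. -/
lemma bPM (f : Maya) (m n : ℤ) :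
    C.psiM m (C.psiP n (C.B f)) + C.psiP n (C.psiM m (C.B f)) =
      if m = n then C.B f else 0 := by
  rcases eq_or_ne m n with rfl | hmn
  · rw [if_pos rfl]
    by_cases hm : ∃ t, f.1 t = m
    · obtain ⟨t, ht⟩ := hm
      rw [C.hP0 f m ⟨t, ht⟩, map_zero, zero_add,
        C.hM f (f.del t) m t ht rfl, map_smul]
      have h1 : ∀ u < t, m < (f.del t).1 u := by
        intro u hu
        show m < deleteAt f.1 t u
        rw [show deleteAt f.1 t u = f.1 u by simp [deleteAt, hu]]
        exact ht ▸ f.sa hu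
      have h2 : (f.del t).1 t ≤ m := by
        show deleteAt f.1 t t ≤ m
        rw [show deleteAt f.1 t t = f.1 (t+1) by simp [deleteAt]]
        exact le_of_lt (ht ▸ f.sa (by omega))
      rw [C.psiP_eq (f.del t) f m t h1 h2 (by
        show f.1 = insertAt (deleteAt f.1 t) m t
        rw [← ht]
        exact (insertAt_deleteAt f.1 t).symm), smul_smul, ← pow_add,
        show t + t = 2*t by ring, pow_mul, neg_one_sq, one_pow, one_smul]
    · push_neg at hm
      rw [C.hM0 f m hm, map_zero, add_zero]
      have h1 : ∀ u < f.pos m, m < f.1 u := fun u hu => f.lt_of_lt_pos hu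
      have h2 : f.1 (f.pos m) < m := lt_of_le_of_ne (f.pos_le m) (hm _)
      set gm : Maya := mkIns f m (f.pos m) h1 h2 with hgm
      rw [C.psiP_eq f gm m (f.pos m) h1 h2.le rfl, map_smul,
        C.hM gm f m (f.pos m) (insertAt_self f.1 m (f.pos m))
          (deleteAt_insertAt f.1 m (f.pos m)).symm, smul_smul, ← pow_add,
        show f.pos m + f.pos m = 2 * f.pos m by ring, pow_mul, neg_one_sq, one_pow, one_smul]
  · rw [if_neg hmn]
    by_cases hn : ∃ u, f.1 u = n
    · -- ψ⁺_n kills the first term; in the second, n survives deletion of m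
      rw [C.hP0 f n hn, map_zero, zero_add]
      by_cases hm : ∃ t, f.1 t = m
      · obtain ⟨t, ht⟩ := hm
        obtain ⟨u, hu⟩ := hn
        have htu : t ≠ u := fun h => hmn (by rw [← ht, ← hu, h])
        rw [C.hM f (f.del t) m t ht rfl, map_smul,
          C.hP0 (f.del t) n (by
            obtain ⟨w, hw⟩ := deleteAt_mem f.1 t (Ne.symm htu)
            exact ⟨w, hw.trans hu⟩), smul_zero]
      · push_neg at hm
        rw [C.hM0 f m hm, map_zero]
    · by_cases hm : ∃ t, f.1 t = m
      · -- the main case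
        push_neg at hn
        obtain ⟨t, ht⟩ := hm
        set p := f.pos n with hp
        have hp1 : ∀ u < p, n < f.1 u := fun u hu => f.lt_of_lt_pos hu
        have hp2 : f.1 p < n := lt_of_le_of_ne (f.pos_le n) (hn _)
        set gp : Maya := mkIns f n p hp1 hp2 with hgp
        rcases Nat.lt_or_ge t p with hcase | hcase
        · -- t < p : m sits at position t in gp ; insertion in f.del t at p-1
          have hmem : gp.1 t = m := by
            show insertAt f.1 n p t = m
            simp only [insertAt, if_pos hcase]
            exact ht
          have hd1 : ∀ u < p - 1, n < (f.del t).1 u := by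
            intro u hu
            show n < deleteAt f.1 t u
            unfold deleteAt
            split_ifs
            · exact hp1 u (by omega)
            · exact hp1 (u+1) (by omega)
          have hd2 : (f.del t).1 (p-1) ≤ n := by
            show deleteAt f.1 t (p-1) ≤ n
            unfold deleteAt
            rw [if_neg (by omega), show p - 1 + 1 = p by omega]
            exact hp2.le
          have hseq : (gp.del t).1 = insertAt (f.del t).1 n (p - 1) :=
            deleteAt_insertAt_comm_lt f.1 n hcase
          rw [C.psiP_eq f gp n p hp1 hp2.le rfl, map_smul,
            C.hM gp (gp.del t) m t hmem rfl,
            C.hM f (f.del t) m t ht rfl, map_smul,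
            C.psiP_eq (f.del t) (gp.del t) n (p-1) hd1 hd2 hseq,
            smul_smul, smul_smul]
          rw [show ((-1:ℂ))^p = ((-1:ℂ))^(p-1) * (-1) by
            rw [← pow_succ, show p - 1 + 1 = p by omega]]
          module
        · -- p ≤ t : m sits at position t+1 in gp ; insertion in f.del t at p
          have hmem : gp.1 (t+1) = m := by
            show insertAt f.1 n p (t+1) = m
            rw [show insertAt f.1 n p (t+1) = f.1 t by
              simp only [insertAt]; rw [if_neg (by omega), if_neg (by omega)]; congr 1]
            exact ht
          have hd1 : ∀ u < p, n < (f.del t).1 u := by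
            intro u hu
            show n < deleteAt f.1 t u
            unfold deleteAt
            rw [if_pos (by omega)]
            exact hp1 u hu
          have hd2 : (f.del t).1 p ≤ n := by
            show deleteAt f.1 t p ≤ n
            unfold deleteAt
            split_ifs
            · exact hp2.le
            · exact le_trans (f.sa_le (by omega)) hp2.le
          have hseq : (gp.del (t+1)).1 = insertAt (f.del t).1 n p :=
            deleteAt_insertAt_comm_ge f.1 n hcase
          rw [C.psiP_eq f gp n p hp1 hp2.le rfl, map_smul,
            C.hM gp (gp.del (t+1)) m (t+1) hmem rfl,
            C.hM f (f.del t) m t ht rfl, map_smul,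
            C.psiP_eq (f.del t) (gp.del (t+1)) n p hd1 hd2 hseq,
            smul_smul, smul_smul, pow_succ]
          module
      · -- m not an entry: both terms vanish
        push_neg at hm; push_neg at hn
        have h1 : ∀ u < f.pos n, n < f.1 u := fun u hu => f.lt_of_lt_pos hu
        have h2 : f.1 (f.pos n) < n := lt_of_le_of_ne (f.pos_le n) (hn _)
        rw [C.hM0 f m hm, map_zero, add_zero,
          C.psiP_eq f (mkIns f n _ h1 h2) n _ h1 h2.le rfl, map_smul,
          C.hM0 _ m (insertAt_not_mem f hm hmn.symm _), smul_zero]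

end WedgeCtx

-- PART C : operator versions, finiteness, KP transfer

namespace WedgeCtx

open TensorProduct

variable {F : Type*} [AddCommGroup F] [Module ℂ F] (C : WedgeCtx F)

lemma acPP (m n : ℤ) (x : F) : C.psiP m (C.psiP n x) = - C.psiP n (C.psiP m x) := by
  have h : (C.psiP m).comp (C.psiP n) = -((C.psiP n).comp (C.psiP m)) :=
    C.B.ext fun f => by simpa using C.bPP f m n
  simpa using LinearMap.ext_iff.mp h x

lemma acMM (m n : ℤ) (x : F) : C.psiM m (C.psiM n x) = - C.psiM n (C.psiM m x) := by
  have h : (C.psiM m).comp (C.psiM n) = -((C.psiM n).comp (C.psiM m)) :=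
    C.B.ext fun f => by simpa using C.bMM f m n
  simpa using LinearMap.ext_iff.mp h x

lemma acMMself (m : ℤ) (x : F) : C.psiM m (C.psiM m x) = 0 := by
  have h : (C.psiM m).comp (C.psiM m) = (0 : F →ₗ[ℂ] F) :=
    C.B.ext fun f => by simpa using C.bMMself f m
  simpa using LinearMap.ext_iff.mp h x

lemma acPM (m n : ℤ) (x : F) :
    C.psiM m (C.psiP n x) + C.psiP n (C.psiM m x) = if m = n then x else 0 := by
  have h : (C.psiM m).comp (C.psiP n) + (C.psiP n).comp (C.psiM m) =
      (if m = n then (LinearMap.id : F →ₗ[ℂ] F) else 0) := by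
    refine C.B.ext fun f => ?_
    have := C.bPM f m n
    split_ifs with hmn <;> simpa [hmn] using this
  have := LinearMap.ext_iff.mp h x
  simpa [apply_ite (fun (L : F →ₗ[ℂ] F) => L x)] using this

lemma psiM_ext_zero (x : F) {m : ℤ}
    (h : ∀ f ∈ (C.B.repr x).support, ∀ s, f.1 s ≠ m) : C.psiM m x = 0 := by
  conv_lhs => rw [← C.B.linearCombination_repr x, Finsupp.linearCombination_apply,
    Finsupp.sum, map_sum]
  exact Finset.sum_eq_zero fun f hf => by rw [map_smul, C.hM0 f m (h f hf), smul_zero]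

lemma psiP_ext_zero (x : F) {m : ℤ}
    (h : ∀ f ∈ (C.B.repr x).support, ∃ s, f.1 s = m) : C.psiP m x = 0 := by
  conv_lhs => rw [← C.B.linearCombination_repr x, Finsupp.linearCombination_apply,
    Finsupp.sum, map_sum]
  exact Finset.sum_eq_zero fun f hf => by rw [map_smul, C.hP0 f m (h f hf), smul_zero]

lemma support_pair_finite (x : F) :
    {m : ℤ | C.psiP m x ≠ 0 ∧ C.psiM m x ≠ 0}.Finite := by
  classical
  set T := (C.B.repr x).support with hT
  choose c hc using fun f : Maya => f.cofinal
  refine Set.Finite.subset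
    (Set.Finite.biUnion T.finite_toSet fun f _ =>
      Set.Finite.biUnion T.finite_toSet fun f' _ => f.finite_range_gt (c f')) ?_
  rintro m ⟨hPm, hMm⟩
  have h1 : ∃ f ∈ T, ∃ s, f.1 s = m := by
    by_contra hcon
    push_neg at hcon
    exact hMm (C.psiM_ext_zero x hcon)
  have h2 : ∃ f' ∈ T, ∀ s, f'.1 s ≠ m := by
    by_contra hcon
    push_neg at hcon
    exact hPm (C.psiP_ext_zero x hcon)
  obtain ⟨f, hf, hs⟩ := h1
  obtain ⟨f', hf', hns⟩ := h2
  have hcm : c f' < m := by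
    by_contra hle
    obtain ⟨s, hs'⟩ := hc f' m (le_of_not_gt hle)
    exact hns s hs'
  exact Set.mem_biUnion hf (Set.mem_biUnion hf' ⟨hs, hcm⟩)

/-- The KP bilinear sum. -/
noncomputable def KPs (x : F) : F ⊗[ℂ] F := ∑ᶠ m : ℤ, C.psiP m x ⊗ₜ[ℂ] C.psiM m x

lemma support_term_subset (x : F) :
    Function.support (fun m : ℤ => C.psiP m x ⊗ₜ[ℂ] C.psiM m x) ⊆
      {m : ℤ | C.psiP m x ≠ 0 ∧ C.psiM m x ≠ 0} := by
  intro m hm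
  simp only [Function.mem_support] at hm
  refine ⟨fun h => hm ?_, fun h => hm ?_⟩
  · rw [h]; simp
  · rw [h]; simp

lemma KPs_eq_sum (x : F) {t : Finset ℤ}
    (ht : (C.support_pair_finite x).toFinset ⊆ t) :
    C.KPs x = ∑ m ∈ t, C.psiP m x ⊗ₜ[ℂ] C.psiM m x := by
  refine finsum_eq_finset_sum_of_support_subset _ ?_
  intro m hm
  have := C.support_term_subset x hm
  exact ht ((C.support_pair_finite x).mem_toFinset.mpr this)

/-- Wedging by the vector `∑ v_m e_m`. -/
noncomputable def wOp (v : ℤ →₀ ℂ) : F →ₗ[ℂ] F := v.sum fun m cm => cm • C.psiP m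

lemma wOp_apply (v : ℤ →₀ ℂ) (x : F) :
    C.wOp v x = ∑ m ∈ v.support, v m • C.psiP m x := by
  simp [wOp, Finsupp.sum, LinearMap.sum_apply]

lemma wOp_apply_subset (v : ℤ →₀ ℂ) (x : F) {t : Finset ℤ} (h : v.support ⊆ t) :
    C.wOp v x = ∑ m ∈ t, v m • C.psiP m x := by
  rw [wOp_apply]
  exact Finset.sum_subset h fun m _ hm => by
    rw [Finsupp.notMem_support_iff.mp hm, zero_smul]

lemma psiP_wOp (m : ℤ) (v : ℤ →₀ ℂ) (x : F) :
    C.psiP m (C.wOp v x) = - C.wOp v (C.psiP m x) := by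
  rw [wOp_apply, map_sum, wOp_apply, ← Finset.sum_neg_distrib]
  refine Finset.sum_congr rfl fun n _ => ?_
  rw [map_smul, C.acPP m n x, smul_neg]

lemma psiM_wOp (m : ℤ) (v : ℤ →₀ ℂ) (x : F) :
    C.psiM m (C.wOp v x) = v m • x - C.wOp v (C.psiM m x) := by
  classical
  rw [wOp_apply, map_sum, wOp_apply]
  have step : ∀ n ∈ v.support,
      C.psiM m (v n • C.psiP n x) =
        v n • (if m = n then x else 0) - v n • C.psiP n (C.psiM m x) := by
    intro n _
    rw [map_smul, ← smul_sub]
    congr 1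
    exact eq_sub_of_add_eq (C.acPM m n x)
  rw [Finset.sum_congr rfl step, Finset.sum_sub_distrib]
  congr 1
  by_cases hm : m ∈ v.support
  · rw [Finset.sum_eq_single_of_mem m hm fun n _ hne => by
      rw [if_neg (Ne.symm hne), smul_zero], if_pos rfl]
  · rw [Finset.sum_eq_zero fun n hn => by
      rw [if_neg (fun h => hm (by rw [h]; exact hn)), smul_zero],
      Finsupp.notMem_support_iff.mp hm, zero_smul]

lemma wOp_wOp (v : ℤ →₀ ℂ) (x : F) : C.wOp v (C.wOp v x) = 0 := by
  have h : C.wOp v (C.wOp v x) = - C.wOp v (C.wOp v x) := by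
    conv_lhs => rw [wOp_apply (x := C.wOp v x)]
    have e1 : ∀ n ∈ v.support, v n • C.psiP n (C.wOp v x) =
        -(C.wOp v (v n • C.psiP n x)) := fun n _ => by
      rw [C.psiP_wOp, map_smul, smul_neg]
    rw [Finset.sum_congr rfl e1, Finset.sum_neg_distrib, ← map_sum, ← wOp_apply]
  have h2 : (2 : ℂ) • C.wOp v (C.wOp v x) = 0 := by
    rw [two_smul]
    nth_rewrite 2 [h]
    exact add_neg_cancel _
  have := smul_eq_zero.mp h2
  simpa using this

theorem KPs_wOp {x : F} (hx : C.KPs x = 0) (v : ℤ →₀ ℂ) : C.KPs (C.wOp v x) = 0 := by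
  classical
  set y := C.wOp v x with hy
  set t : Finset ℤ := ((C.support_pair_finite x).toFinset ∪
    (C.support_pair_finite y).toFinset) ∪ v.support with ht
  have hxt : C.KPs x = ∑ m ∈ t, C.psiP m x ⊗ₜ[ℂ] C.psiM m x :=
    C.KPs_eq_sum x (by intro m hm; simp [ht, hm])
  have hyt : C.KPs y = ∑ m ∈ t, C.psiP m y ⊗ₜ[ℂ] C.psiM m y :=
    C.KPs_eq_sum y (by intro m hm; simp [ht, hm])
  have hterm : ∀ m : ℤ, C.psiP m y ⊗ₜ[ℂ] C.psiM m y =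
      (TensorProduct.map (C.wOp v) (C.wOp v)) (C.psiP m x ⊗ₜ[ℂ] C.psiM m x)
        - v m • (C.wOp v (C.psiP m x) ⊗ₜ[ℂ] x) := by
    intro m
    rw [hy, C.psiP_wOp, C.psiM_wOp, TensorProduct.map_tmul]
    rw [TensorProduct.neg_tmul, TensorProduct.tmul_sub, TensorProduct.tmul_smul]
    abel
  rw [hyt, Finset.sum_congr rfl fun m _ => hterm m, Finset.sum_sub_distrib,
    ← map_sum, ← hxt, hx, map_zero, zero_sub, neg_eq_zero]
  have hsum : ∑ m ∈ t, v m • (C.wOp v (C.psiP m x) ⊗ₜ[ℂ] x) =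
      (C.wOp v (∑ m ∈ t, v m • C.psiP m x)) ⊗ₜ[ℂ] x := by
    rw [map_sum, TensorProduct.sum_tmul]
    exact Finset.sum_congr rfl fun m _ => by rw [map_smul, TensorProduct.smul_tmul']
  rw [hsum, ← C.wOp_apply_subset v x (by intro m hm; simp [ht, hm]), C.wOp_wOp,
    TensorProduct.zero_tmul]

theorem KPs_psiM {x : F} (hx : C.KPs x = 0) (a : ℤ) : C.KPs (C.psiM a x) = 0 := by
  classical
  set y := C.psiM a x with hy
  set t : Finset ℤ := (C.support_pair_finite x).toFinset ∪
    (C.support_pair_finite y).toFinset with ht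
  have hxt : C.KPs x = ∑ m ∈ t, C.psiP m x ⊗ₜ[ℂ] C.psiM m x :=
    C.KPs_eq_sum x (by intro m hm; simp [ht, hm])
  have hyt : C.KPs y = ∑ m ∈ t, C.psiP m y ⊗ₜ[ℂ] C.psiM m y :=
    C.KPs_eq_sum y (by intro m hm; simp [ht, hm])
  have hterm : ∀ m : ℤ, C.psiP m y ⊗ₜ[ℂ] C.psiM m y =
      (TensorProduct.map (C.psiM a) (C.psiM a)) (C.psiP m x ⊗ₜ[ℂ] C.psiM m x) := by
    intro m
    have hPy : C.psiP m y = (if a = m then x else 0) - C.psiM a (C.psiP m x) := by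
      rw [hy]
      exact eq_sub_of_add_eq' (C.acPM a m x)
    have hMy : C.psiM m y = - C.psiM a (C.psiM m x) := by
      rw [hy, C.acMM m a x]
    rw [hPy, hMy, TensorProduct.map_tmul]
    rcases eq_or_ne a m with rfl | hne
    · rw [C.acMMself]; simp
    · rw [if_neg hne, zero_sub, TensorProduct.neg_tmul, TensorProduct.tmul_neg, neg_neg]
  rw [hyt, Finset.sum_congr rfl fun m _ => hterm m, ← map_sum, ← hxt, hx, map_zero]

end WedgeCtx

-- PART D : lex order helpers and main argument

lemma deleteAt_zero_apply (f : ℕ → ℤ) (j : ℕ) : deleteAt f 0 j = f (j + 1) := by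
  simp [deleteAt]

lemma lex_head {f g : ℕ → ℤ} (h : toLex f ≤ toLex g) : f 0 ≤ g 0 := by
  rcases h.lt_or_eq with hlt | heq
  · obtain ⟨i, hj, hi⟩ := hlt
    rcases Nat.eq_zero_or_pos i with rfl | hpos
    · exact le_of_lt hi
    · exact le_of_eq (hj 0 hpos)
  · exact le_of_eq (congrFun (congrArg ofLex heq) 0)

lemma lex_tail {f g : ℕ → ℤ} (h : toLex f ≤ toLex g) (h0 : f 0 = g 0) :
    toLex (deleteAt f 0) ≤ toLex (deleteAt g 0) := by
  rcases h.lt_or_eq with hlt | heq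
  · obtain ⟨i, hj, hi⟩ := hlt
    rcases Nat.eq_zero_or_pos i with rfl | hpos
    · exact absurd hi (by show ¬ f 0 < g 0; omega)
    · refine le_of_lt ⟨i - 1, fun j hji => ?_, ?_⟩
      · show deleteAt f 0 j = deleteAt g 0 j
        rw [deleteAt_zero_apply, deleteAt_zero_apply]
        exact hj (j + 1) (by omega)
      · show deleteAt f 0 (i - 1) < deleteAt g 0 (i - 1)
        rw [deleteAt_zero_apply, deleteAt_zero_apply, show i - 1 + 1 = i by omega]
        exact hi
  · have : f = g := congrArg ofLex heq
    rw [this]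

lemma eq_vac_of_le {f : Maya} {k : ℤ} (hch : HasCharge f.1 k)
    (hle : toLex f.1 ≤ toLex (vacSeq k).1) : f = vacSeq k := by
  rcases hle.lt_or_eq with hlt | heq
  · obtain ⟨i, hj, hi⟩ := hlt
    have hi' : f.1 i < k - i := hi
    exact absurd (Maya.ge_of_hasCharge hch i) (by omega)
  · exact Maya.ext (congrArg ofLex heq)

lemma delete_eq_unique (f : Maya) {s1 s2 : ℕ} (h : deleteAt f.1 s1 = deleteAt f.1 s2) :
    s1 = s2 := by
  by_contra hne
  rcases Ne.lt_or_gt hne with hl | hl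
  · have := congrFun h s1
    rw [show deleteAt f.1 s1 s1 = f.1 (s1+1) by simp [deleteAt],
      show deleteAt f.1 s2 s1 = f.1 s1 by simp [deleteAt, hl]] at this
    exact absurd this (ne_of_lt (f.sa (by omega)))
  · have := congrFun h s2
    rw [show deleteAt f.1 s1 s2 = f.1 s2 by simp [deleteAt, hl],
      show deleteAt f.1 s2 s2 = f.1 (s2+1) by simp [deleteAt]] at this
    exact absurd this (ne_of_gt (f.sa (by omega)))

namespace WedgeCtx

variable {F : Type*} [AddCommGroup F] [Module ℂ F] (C : WedgeCtx F)

lemma KPs_vac (j : ℤ) : C.KPs (C.B (vacSeq j)) = 0 := by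
  refine finsum_eq_zero_of_forall_eq_zero fun m => ?_
  rcases le_or_gt m j with h | h
  · rw [C.hP0 (vacSeq j) m ⟨(j - m).toNat, by rw [vacSeq_apply]; omega⟩,
      TensorProduct.zero_tmul]
  · rw [C.hM0 (vacSeq j) m (fun s => by rw [vacSeq_apply]; omega),
      TensorProduct.tmul_zero]

lemma KPs_foldr (L : List (ℤ →₀ ℂ)) (j : ℤ) :
    C.KPs (L.foldr (fun c v => c.sum fun m cm => cm • C.psiP m v) (C.B (vacSeq j))) = 0 := by
  induction L with
  | nil => exact C.KPs_vac j
  | cons c L ih =>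
      have : (c :: L).foldr (fun c v => c.sum fun m cm => cm • C.psiP m v) (C.B (vacSeq j)) =
          C.wOp c (L.foldr (fun c v => c.sum fun m cm => cm • C.psiP m v) (C.B (vacSeq j))) := by
        rw [List.foldr_cons, C.wOp_apply]
        rfl
      rw [this]
      exact C.KPs_wOp ih c

end WedgeCtx

-- PART E : the backward direction

namespace WedgeCtx

open TensorProduct

variable {F : Type*} [AddCommGroup F] [Module ℂ F] (C : WedgeCtx F)

lemma wOp_smul (c : ℂ) (v : ℤ →₀ ℂ) (x : F) : C.wOp (c • v) x = c • C.wOp v x := by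
  rw [C.wOp_apply_subset (c • v) x Finsupp.support_smul, C.wOp_apply, Finset.smul_sum]
  refine Finset.sum_congr rfl fun m _ => ?_
  rw [Finsupp.smul_apply, smul_eq_mul, smul_smul]

lemma psiP_vac (j : ℤ) : C.psiP (j + 1) (C.B (vacSeq j)) = C.B (vacSeq (j + 1)) := by
  have h := C.psiP_eq (vacSeq j) (vacSeq (j+1)) (j+1) 0
    (fun n hn => absurd hn (by omega))
    (by rw [vacSeq_apply]; omega)
    (by
      funext i
      rcases Nat.eq_zero_or_pos i with rfl | hpos
      · show (vacSeq (j+1)).1 0 = insertAt (vacSeq j).1 (j+1) 0 0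
        rw [vacSeq_apply, insertAt_self]
        simp
      · show (vacSeq (j+1)).1 i = insertAt (vacSeq j).1 (j+1) 0 i
        rw [vacSeq_apply]
        unfold insertAt
        rw [if_neg (by omega), if_neg (by omega), vacSeq_apply,
          show ((i - 1 : ℕ) : ℤ) = (i : ℤ) - 1 by omega]
        ring)
  rw [h, pow_zero, one_smul]

lemma main_induction : ∀ n : ℕ, ∀ (k : ℤ) (g : F), g ≠ 0 →
    (∀ f ∈ (C.B.repr g).support, HasCharge f.1 k) →
    (∃ f0 ∈ (C.B.repr g).support, (∀ f ∈ (C.B.repr g).support, toLex f.1 ≤ toLex f0.1) ∧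
      ∀ i ≥ n, f0.1 i = k - i) →
    C.KPs g = 0 →
    ∃ L : List (ℤ →₀ ℂ), g = L.foldr (fun c v => c.sum fun m cm => cm • C.psiP m v)
      (C.B (vacSeq (k - L.length))) := by
  intro n
  induction n with
  | zero =>
    intro k g hg hch hmaxE _
    classical
    obtain ⟨f0, hf0, hmax, hstab⟩ := hmaxE
    have hf0v : f0 = vacSeq k := Maya.ext (funext fun i => hstab i (Nat.zero_le i))
    have hall : ∀ f ∈ (C.B.repr g).support, f = vacSeq k := fun f hf =>
      eq_vac_of_le (hch f hf) (hf0v ▸ hmax f hf)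
    have hne : (C.B.repr g).support.Nonempty :=
      Finsupp.support_nonempty_iff.mpr
        (fun h0 => hg (by rw [← C.B.linearCombination_repr g, h0, map_zero]))
    have hsupp_eq : (C.B.repr g).support = {vacSeq k} :=
      hne.subset_singleton_iff.mp (fun f hf => Finset.mem_singleton.mpr (hall f hf))
    have hgc : g = (C.B.repr g (vacSeq k)) • C.B (vacSeq k) := by
      conv_lhs => rw [← C.B.linearCombination_repr g, Finsupp.linearCombination_apply,
        Finsupp.sum]
      rw [hsupp_eq, Finset.sum_singleton]
    have hcne : C.B.repr g (vacSeq k) ≠ 0 :=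
      Finsupp.mem_support_iff.mp (hsupp_eq ▸ Finset.mem_singleton_self _)
    refine ⟨[Finsupp.single k (C.B.repr g (vacSeq k))], ?_⟩
    rw [List.foldr_cons, List.foldr_nil]
    rw [Finsupp.sum_single_index (by rw [zero_smul])]
    rw [show ((k : ℤ) - ([Finsupp.single k (C.B.repr g (vacSeq k))].length : ℤ)) = k - 1 by
      simp]
    have hpv : C.psiP k (C.B (vacSeq (k-1))) = C.B (vacSeq k) := by
      have h := C.psiP_vac (k-1)
      rw [show (k:ℤ) - 1 + 1 = k by ring] at h
      exact h
    rw [hpv]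
    exact hgc
  | succ n IH =>
    intro k g hg hch hmaxE hKP
    classical
    obtain ⟨f0, hf0, hmax, hstab⟩ := hmaxE
    have hc0 : C.B.repr g f0 ≠ 0 := Finsupp.mem_support_iff.mp hf0
    set a : ℤ := f0.1 0 with ha
    set μ : Maya := f0.del 0 with hμdef
    -- entries equal to a must be in head position
    have hhead : ∀ f ∈ (C.B.repr g).support, ∀ t : ℕ, f.1 t = a → t = 0 := by
      intro f hf t hfa
      have h0 : f.1 0 ≤ a := lex_head (hmax f hf)
      by_contra hne
      have := f.sa (show 0 < t by omega)
      omega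
    have hM_at1 : ∀ f ∈ (C.B.repr g).support, f.1 0 = a →
        C.psiM a (C.B f) = C.B (f.del 0) := by
      intro f _ h
      rw [C.hM f (f.del 0) a 0 h rfl, pow_zero, one_smul]
    have hM_at2 : ∀ f ∈ (C.B.repr g).support, f.1 0 ≠ a →
        C.psiM a (C.B f) = 0 := by
      intro f hf h
      exact C.hM0 f a (fun s hs => h (by rw [← hhead f hf s hs]; exact hs))
    have hg_eq : g = ∑ f ∈ (C.B.repr g).support, (C.B.repr g) f • C.B f := by
      conv_lhs => rw [← C.B.linearCombination_repr g, Finsupp.linearCombination_apply,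
        Finsupp.sum]
    have hcoef : ∀ m : ℤ, C.B.repr (C.psiM m g) μ =
        ∑ f ∈ (C.B.repr g).support,
          (C.B.repr g) f * (C.B.repr (C.psiM m (C.B f)) μ) := by
      intro m
      conv_lhs => rw [hg_eq, map_sum, map_sum, Finsupp.finset_sum_apply]
      refine Finset.sum_congr rfl fun f _ => ?_
      rw [map_smul, map_smul, Finsupp.smul_apply, smul_eq_mul]
    have hval_mem : ∀ m : ℤ, C.B.repr (C.psiM m g) μ ≠ 0 →
        ∃ f ∈ (C.B.repr g).support, ∃ s, f.1 s = m ∧ deleteAt f.1 s = μ.1 := by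
      intro m hm
      rw [hcoef] at hm
      obtain ⟨f, hf, hfne⟩ := Finset.exists_ne_zero_of_sum_ne_zero hm
      have hex : ∃ s, f.1 s = m := by
        by_contra hcon
        push_neg at hcon
        rw [C.hM0 f m hcon, map_zero, Finsupp.coe_zero, Pi.zero_apply, mul_zero] at hfne
        exact hfne rfl
      obtain ⟨s, hs⟩ := hex
      refine ⟨f, hf, s, hs, ?_⟩
      by_contra hcon
      rw [C.hM f (f.del s) m s hs rfl, map_smul, Finsupp.smul_apply, C.B.repr_self,
        Finsupp.single_apply, if_neg (show ¬ (f.del s = μ) from fun h => hcon (congrArg Subtype.val h)),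
        smul_zero, mul_zero] at hfne
      exact hfne rfl
    have hval_fin : (Function.support (fun m : ℤ => C.B.repr (C.psiM m g) μ)).Finite := by
      have hsub : ∀ f : Maya,
          ({m : ℤ | ∃ s, f.1 s = m ∧ deleteAt f.1 s = μ.1}).Subsingleton := by
        intro f m1 hm1 m2 hm2
        obtain ⟨s1, hs1, hd1⟩ := hm1
        obtain ⟨s2, hs2, hd2⟩ := hm2
        have hseq : s1 = s2 := delete_eq_unique f (hd1.trans hd2.symm)
        rw [← hs1, ← hs2, hseq]
      refine Set.Finite.subset (Set.Finite.biUnion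
        ((C.B.repr g).support.finite_toSet) fun f _ => (hsub f).finite) ?_
      intro m hm
      obtain ⟨f, hf, s, hs, hd⟩ := hval_mem m hm
      exact Set.mem_biUnion hf ⟨s, hs, hd⟩
    set v : ℤ →₀ ℂ := Finsupp.ofSupportFinite _ hval_fin with hvdef
    have hv : ∀ m, v m = C.B.repr (C.psiM m g) μ := fun m =>
      congrFun Finsupp.ofSupportFinite_coe m
    -- the linear functional ⟨·,μ⟩ on the second slot
    set Lmu : F ⊗[ℂ] F →ₗ[ℂ] F :=
      TensorProduct.lift (LinearMap.flip ((LinearMap.lsmul ℂ F).comp (C.B.coord μ))) with hLmu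
    have hLmu_tmul : ∀ x y : F, Lmu (x ⊗ₜ[ℂ] y) = (C.B.repr y μ) • x := by
      intro x y
      simp [hLmu, Module.Basis.coord_apply]
    set t : Finset ℤ := (C.support_pair_finite g).toFinset ∪ v.support with htdef
    have hKPt : (0 : F ⊗[ℂ] F) = ∑ m ∈ t, C.psiP m g ⊗ₜ[ℂ] C.psiM m g := by
      rw [← hKP]
      exact C.KPs_eq_sum g Finset.subset_union_left
    have hAnn : ∑ m ∈ t, v m • C.psiP m g = 0 := by
      have h := congrArg Lmu hKPt
      rw [map_zero, map_sum] at h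
      have h2 : ∀ m ∈ t, Lmu (C.psiP m g ⊗ₜ[ℂ] C.psiM m g) = v m • C.psiP m g := by
        intro m _
        rw [hLmu_tmul, hv]
      rw [Finset.sum_congr rfl h2] at h
      exact h.symm
    have hWg : C.wOp v g = 0 := by
      rw [C.wOp_apply_subset v g Finset.subset_union_right]
      exact hAnn
    have hkey : C.wOp v (C.psiM a g) = v a • g := by
      have h := C.psiM_wOp a v g
      rw [hWg, map_zero] at h
      exact (sub_eq_zero.mp h.symm).symm
    -- coefficient of μ in ψ⁻ₐ g
    have hg1μ : C.B.repr (C.psiM a g) μ = C.B.repr g f0 := by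
      rw [hcoef]
      rw [Finset.sum_eq_single_of_mem f0 hf0 ?side]
      · rw [hM_at1 f0 hf0 ha.symm, C.B.repr_self, Finsupp.single_apply, if_pos rfl, mul_one]
      case side =>
        intro f hf hne
        by_cases hfa : f.1 0 = a
        · rw [hM_at1 f hf hfa, C.B.repr_self, Finsupp.single_apply, if_neg ?_, mul_zero]
          intro hdel
          apply hne
          apply Maya.ext
          funext i
          rcases Nat.eq_zero_or_pos i with rfl | hpos
          · rw [hfa, ha]
          · have hdd : deleteAt f.1 0 (i - 1) = deleteAt f0.1 0 (i - 1) :=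
              congrFun (congrArg Subtype.val hdel) (i - 1)
            rw [deleteAt_zero_apply, deleteAt_zero_apply,
              show i - 1 + 1 = i by omega] at hdd
            exact hdd
        · rw [hM_at2 f hf hfa, map_zero, Finsupp.coe_zero, Pi.zero_apply, mul_zero]
    have hg1ne : C.psiM a g ≠ 0 := fun h => hc0 (by rw [← hg1μ, h]; simp)
    -- supp structure of ψ⁻ₐ g
    have hg1_eq : C.psiM a g = ∑ f ∈ (C.B.repr g).support,
        (C.B.repr g) f • C.psiM a (C.B f) := by
      conv_lhs => rw [hg_eq, map_sum]
      exact Finset.sum_congr rfl fun f _ => map_smul _ _ _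
    have hsupp1 : ∀ f' ∈ (C.B.repr (C.psiM a g)).support,
        ∃ f ∈ (C.B.repr g).support, f.1 0 = a ∧ f' = f.del 0 := by
      intro f' hf'
      rw [Finsupp.mem_support_iff] at hf'
      rw [hg1_eq, map_sum, Finsupp.finset_sum_apply] at hf'
      obtain ⟨f, hf, hfne⟩ := Finset.exists_ne_zero_of_sum_ne_zero hf'
      by_cases hfa : f.1 0 = a
      · refine ⟨f, hf, hfa, ?_⟩
        rw [map_smul, hM_at1 f hf hfa, Finsupp.smul_apply, C.B.repr_self,
          Finsupp.single_apply] at hfne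
        by_contra hcon
        simp only [if_neg (show ¬ (f.del 0 = f') from fun h => hcon (Maya.ext (congrArg Subtype.val h)).symm), smul_zero] at hfne
        exact hfne rfl
      · rw [map_smul, hM_at2 f hf hfa, map_zero, smul_zero, Finsupp.coe_zero,
          Pi.zero_apply] at hfne
        exact absurd rfl hfne
    have hch1 : ∀ f' ∈ (C.B.repr (C.psiM a g)).support, HasCharge f'.1 (k - 1) := by
      intro f' hf'
      obtain ⟨f, hf, hfa, rfl⟩ := hsupp1 f' hf'
      exact hasCharge_deleteAt (hch f hf) 0
    have hmax1 : ∀ f' ∈ (C.B.repr (C.psiM a g)).support, toLex f'.1 ≤ toLex μ.1 := by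
      intro f' hf'
      obtain ⟨f, hf, hfa, rfl⟩ := hsupp1 f' hf'
      exact lex_tail (hmax f hf) (hfa.trans ha)
    have hμmem : μ ∈ (C.B.repr (C.psiM a g)).support :=
      Finsupp.mem_support_iff.mpr (by rw [hg1μ]; exact hc0)
    have hstab1 : ∀ i ≥ n, μ.1 i = (k - 1) - i := by
      intro i hi
      show deleteAt f0.1 0 i = (k - 1) - i
      rw [deleteAt_zero_apply, hstab (i+1) (by omega)]
      push_cast
      ring
    obtain ⟨L1, hL1⟩ := IH (k - 1) (C.psiM a g) hg1ne hch1 ⟨μ, hμmem, hmax1, hstab1⟩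
      (C.KPs_psiM hKP a)
    refine ⟨((C.B.repr g f0)⁻¹ • v) :: L1, ?_⟩
    rw [List.foldr_cons]
    rw [show ((k : ℤ) - ((((C.B.repr g f0)⁻¹ • v) :: L1).length : ℤ)) =
        (k - 1) - (L1.length : ℤ) by simp; push_cast; ring]
    rw [← hL1]
    rw [show (((C.B.repr g f0)⁻¹ • v).sum fun m cm => cm • C.psiP m (C.psiM a g)) =
        C.wOp ((C.B.repr g f0)⁻¹ • v) (C.psiM a g) from (C.wOp_apply _ _).symm]
    rw [C.wOp_smul, hkey, hv, hg1μ, smul_smul, inv_mul_cancel₀ hc0, one_smul]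

end WedgeCtx


open scoped TensorProduct

/-- A nonzero `g ∈ F^{(k)}` lies in the `GL_∞`-orbit `O_k = R(GL_∞)|k⟩` if and only if
`∑_{i ∈ ℤ+1/2} ψ⁺_i g ⊗ ψ⁻_{-i} g = 0` in `F ⊗ F`.

Setup: `F` is the semi-infinite wedge space, presented by its monomial basis `B` and
the wedging/contraction operators `psiP m` (wedging by `e_m`, i.e. `ψ⁺_i` with
`m = -i+1/2`) and `psiM m` (contraction of `e_m`, i.e. `ψ⁻_{-i}` for the same `i`), so
the bilinear sum reads `∑_{m ∈ ℤ} (psiP m g) ⊗ (psiM m g)`.  Membership in the orbit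
`R(GL_∞)|k⟩` is expressed by `g` being a wedge `f_1 ∧ ⋯ ∧ f_r ∧ |k - r⟩` of finitely
many vectors `f_j = ∑_m c_{j,m} e_m` with the vacuum `|k - r⟩`, wedging by `f` being
the operator `∑_m c_m ψ⁺_m`. -/
theorem orbit_iff_fermionic_KP
    {F : Type*} [AddCommGroup F] [Module ℂ F] (B : Module.Basis Maya ℂ F)
    (psiP psiM : ℤ → F →ₗ[ℂ] F)
    (hP0 : ∀ (f : Maya) (m : ℤ), (∃ s, f.1 s = m) → psiP m (B f) = 0)
    (hP : ∀ (f g : Maya) (m : ℤ) (s : ℕ), (∀ n, n < s ↔ m < f.1 n) →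
      g.1 = insertAt f.1 m s → psiP m (B f) = ((-1 : ℂ)) ^ s • B g)
    (hM0 : ∀ (f : Maya) (m : ℤ), (∀ s, f.1 s ≠ m) → psiM m (B f) = 0)
    (hM : ∀ (f g : Maya) (m : ℤ) (s : ℕ), f.1 s = m →
      g.1 = deleteAt f.1 s → psiM m (B f) = ((-1 : ℂ)) ^ s • B g)
    (k : ℤ) (g : F) (hg : g ≠ 0)
    (hgk : g ∈ Submodule.span ℂ (B '' {f : Maya | HasCharge f.1 k})) :
    (∃ L : List (ℤ →₀ ℂ),
        g = L.foldr (fun c v => c.sum fun m cm => cm • psiP m v)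
              (B (vacSeq (k - L.length)))) ↔
      ∑ᶠ m : ℤ, (psiP m g) ⊗ₜ[ℂ] (psiM m g) = 0 := by
  classical
  let C : WedgeCtx F := ⟨B, psiP, psiM, hP0, hP, hM0, hM⟩
  constructor
  · rintro ⟨L, hL⟩
    rw [hL]
    exact C.KPs_foldr L (k - L.length)
  · intro hKPeq
    have hsupp : ∀ f ∈ (C.B.repr g).support, HasCharge f.1 k := by
      have hsub := (Module.Basis.mem_span_image (b := B)).mp hgk
      exact fun f hf => hsub hf
    have hne : (C.B.repr g).support.Nonempty :=
      Finsupp.support_nonempty_iff.mpr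
        (fun h0 => hg (by rw [← C.B.linearCombination_repr g, h0, map_zero]))
    obtain ⟨f0, hf0, hmax⟩ :=
      Finset.exists_max_image (C.B.repr g).support (fun f => toLex f.1) hne
    obtain ⟨N, hN⟩ := hsupp f0 hf0
    exact C.main_induction N k g hg hsupp ⟨f0, hf0, hmax, fun i hi => hN i hi⟩ hKPeq
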